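/- For any simple graph G, a proper edge coloring of G using at most Δ(G)+1 colors exists, where Δ(G) is the maximum vertex degree. -/

import Mathlib

set_option linter.unusedSectionVars false
namespace VizingProof
open SimpleGraph Finset

open SimpleGraph Finset

variable {V : Type*} [Fintype V] [DecidableEq V]

/-- Properness of an edge coloring on a finite set of edges. -/
def Proper (s : Finset (Sym2 V)) (c : Sym2 V → ℕ) : Prop :=
  ∀ ⦃e⦄, e ∈ s → ∀ ⦃e'⦄, e' ∈ s → e ≠ e' → (∃ v, v ∈ e ∧ v ∈ e') → c e ≠ c e'

/-- Colors used at a vertex. -/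
def used (s : Finset (Sym2 V)) (c : Sym2 V → ℕ) (v : V) : Finset ℕ :=
  (s.filter (fun e => v ∈ e)).image c

lemma mem_used {s : Finset (Sym2 V)} {c : Sym2 V → ℕ} {v : V} {t : ℕ} :
    t ∈ used s c v ↔ ∃ e ∈ s, v ∈ e ∧ c e = t := by
  simp [used, and_assoc]

lemma used_card_le {G : SimpleGraph V} [DecidableRel G.Adj] {s : Finset (Sym2 V)}
    (hs : s ⊆ G.edgeFinset) (c : Sym2 V → ℕ) (v : V) :
    (used s c v).card ≤ G.degree v := by
  calc (used s c v).card ≤ (s.filter (fun e => v ∈ e)).card := Finset.card_image_le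
    _ ≤ (G.incidenceFinset v).card := by
        apply Finset.card_le_card
        intro e he
        simp only [Finset.mem_filter] at he
        rw [mem_incidenceFinset]
        exact ⟨(G.mem_edgeFinset).1 (hs he.1), he.2⟩
    _ = G.degree v := G.card_incidenceFinset_eq_degree v

lemma exists_free {G : SimpleGraph V} [DecidableRel G.Adj] {s : Finset (Sym2 V)}
    (hs : s ⊆ G.edgeFinset) (c : Sym2 V → ℕ) (v : V) :
    ∃ b, b < G.maxDegree + 1 ∧ b ∉ used s c v := by
  by_contra h
  push_neg at h
  have hsub : Finset.range (G.maxDegree + 1) ⊆ used s c v := by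
    intro b hb
    exact h b (Finset.mem_range.1 hb)
  have := Finset.card_le_card hsub
  rw [Finset.card_range] at this
  have h2 := (used_card_le hs c v).trans (G.degree_le_maxDegree v)
  omega


open SimpleGraph Finset
variable {V : Type*} [Fintype V] [DecidableEq V]

/-- The subgraph of edges colored `a` or `b`. -/
def kg (s : Finset (Sym2 V)) (c : Sym2 V → ℕ) (a b : ℕ) : SimpleGraph V where
  Adj u v := u ≠ v ∧ s(u, v) ∈ s ∧ (c s(u, v) = a ∨ c s(u, v) = b)
  symm := by
    refine ⟨?_⟩
    intro u v h
    exact ⟨Ne.symm h.1, by rw [Sym2.eq_swap]; exact h.2⟩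
  loopless := ⟨fun v h => h.1 rfl⟩

lemma kg_adj {s : Finset (Sym2 V)} {c : Sym2 V → ℕ} {a b : ℕ} {u v : V} :
    (kg s c a b).Adj u v ↔ u ≠ v ∧ s(u, v) ∈ s ∧ (c s(u, v) = a ∨ c s(u, v) = b) := Iff.rfl

def swapf (a b t : ℕ) : ℕ := if t = a then b else if t = b then a else t

lemma swapf_inj (a b : ℕ) : Function.Injective (swapf a b) := by
  intro t t' h
  unfold swapf at h
  split_ifs at h <;> omega

lemma swapf_of_ne {a b t : ℕ} (ha : t ≠ a) (hb : t ≠ b) : swapf a b t = t := by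
  simp [swapf, ha, hb]

open scoped Classical in
/-- Swap colors `a`, `b` on the Kempe component of `x`. -/
noncomputable def kswap (s : Finset (Sym2 V)) (c : Sym2 V → ℕ) (a b : ℕ) (x : V) :
    Sym2 V → ℕ :=
  fun e => if ∃ v ∈ e, (kg s c a b).Reachable x v then swapf a b (c e) else c e

/-- If an edge colored a/b has a reachable endpoint, all its vertices are reachable. -/
lemma reach_all {s : Finset (Sym2 V)} {c : Sym2 V → ℕ} {a b : ℕ} {x : V} {e : Sym2 V}
    (he : e ∈ s) (hc : c e = a ∨ c e = b) (hr : ∃ v ∈ e, (kg s c a b).Reachable x v) :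
    ∀ v ∈ e, (kg s c a b).Reachable x v := by
  induction e with
  | _ p q =>
    obtain ⟨v, hv, hreach⟩ := hr
    intro w hw
    rcases eq_or_ne p q with rfl | hpq
    · simp only [Sym2.mem_iff] at hv hw
      rcases hv with rfl | rfl <;> rcases hw with rfl | rfl <;> exact hreach
    · have hadj : (kg s c a b).Adj p q := ⟨hpq, he, hc⟩
      simp only [Sym2.mem_iff] at hv hw
      rcases hv with rfl | rfl <;> rcases hw with rfl | rfl
      · exact hreach
      · exact hreach.trans hadj.reachable
      · exact hreach.trans hadj.symm.reachable
      · exact hreach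

lemma kswap_proper {s : Finset (Sym2 V)} {c : Sym2 V → ℕ} {a b : ℕ} {x : V}
    (hp : Proper s c) : Proper s (kswap s c a b x) := by
  intro e he e' he' hne hshare
  obtain ⟨v, hv, hv'⟩ := hshare
  have hcc := hp he he' hne ⟨v, hv, hv'⟩
  unfold kswap
  split_ifs with h1 h2 h2
  · exact fun hh => hcc (swapf_inj a b hh)
  · -- e swapped, e' not
    intro hh
    rcases eq_or_ne (c e) a with hca | hca
    · have : c e' = b := by rw [← hh, hca]; simp [swapf]
      exact h2 ⟨v, hv', reach_all he (Or.inl hca) h1 v hv⟩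
    · rcases eq_or_ne (c e) b with hcb | hcb
      · have : c e' = a := by
          rw [← hh, hcb]; unfold swapf; split_ifs with h <;> omega
        exact h2 ⟨v, hv', reach_all he (Or.inr hcb) h1 v hv⟩
      · rw [swapf_of_ne hca hcb] at hh; exact hcc hh
  · -- e' swapped, e not
    intro hh
    rcases eq_or_ne (c e') a with hca | hca
    · have : c e = b := by rw [hh, hca]; simp [swapf]
      exact h1 ⟨v, hv, reach_all he' (Or.inl hca) h2 v hv'⟩
    · rcases eq_or_ne (c e') b with hcb | hcb
      · have : c e = a := by
          rw [hh, hcb]; unfold swapf; split_ifs with h <;> omega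
        exact h1 ⟨v, hv, reach_all he' (Or.inr hcb) h2 v hv'⟩
      · rw [swapf_of_ne hca hcb] at hh; exact hcc hh
  · exact hcc

lemma kswap_lt {s : Finset (Sym2 V)} {c : Sym2 V → ℕ} {a b : ℕ} {x : V} {N : ℕ}
    (ha : a < N) (hb : b < N) {e : Sym2 V} (hc : c e < N) : kswap s c a b x e < N := by
  unfold kswap
  split_ifs
  · unfold swapf; split_ifs <;> omega
  · exact hc

/-- At a vertex not reachable from x, the coloring is unchanged on incident edges. -/
lemma kswap_eq_of_not_reach {s : Finset (Sym2 V)} {c : Sym2 V → ℕ} {a b : ℕ} {x : V}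
    {e : Sym2 V} (he : e ∈ s) {v : V} (hv : v ∈ e)
    (hnr : ¬ (kg s c a b).Reachable x v) : kswap s c a b x e = c e := by
  unfold kswap
  split_ifs with h
  · rcases eq_or_ne (c e) a with hca | hca
    · exact absurd (reach_all he (Or.inl hca) h v hv) hnr
    · rcases eq_or_ne (c e) b with hcb | hcb
      · exact absurd (reach_all he (Or.inr hcb) h v hv) hnr
      · exact swapf_of_ne hca hcb
  · rfl

/-- After the swap, `b` is not used at `x` provided `a` was not. -/
lemma kswap_b_free {s : Finset (Sym2 V)} {c : Sym2 V → ℕ} {a b : ℕ} {x : V}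
    (hab : a ≠ b) (ha : ∀ e ∈ s, x ∈ e → c e ≠ a) :
    ∀ e ∈ s, x ∈ e → kswap s c a b x e ≠ b := by
  intro e he hx
  unfold kswap
  split_ifs with h
  · intro hh
    unfold swapf at hh
    split_ifs at hh with h1 h2
    · exact ha e he hx h1
    · exact hab (by omega)
    · exact h2 hh
  · exact absurd ⟨x, hx, Reachable.refl x⟩ h


open SimpleGraph Finset
variable {V : Type*} [Fintype V] [DecidableEq V]

open scoped Classical in
lemma factA {G : SimpleGraph V} [DecidableRel G.Adj] {x u v : V}
    (hdeg : ∀ w, G.degree w ≤ 2) (hx : G.degree x ≤ 1) (hu : G.degree u ≤ 1)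
    (hv : G.degree v ≤ 1) (hxu : x ≠ u) (hxv : x ≠ v) (huv : u ≠ v)
    (hru : G.Reachable x u) (hrv : G.Reachable x v) : False := by
  set S : Finset V := univ.filter (fun w => G.Reachable x w) with hS
  have hmemS : ∀ w, w ∈ S ↔ G.Reachable x w := by
    intro w; simp [hS]
  have hclosed : ∀ p ∈ S, ∀ q, G.Adj p q → q ∈ S := by
    intro p hp q hadj
    rw [hmemS] at hp ⊢
    exact hp.trans hadj.reachable
  set ES : Finset (Sym2 V) := G.edgeFinset.filter (fun e => ∀ w ∈ e, w ∈ S) with hES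
  -- Step A : S.card ≤ ES.card + 1
  have hstep : ∀ w, w ≠ x → G.Reachable w x → ∃ z, G.Adj w z ∧ G.dist z x < G.dist w x := by
    intro w hw hr
    obtain ⟨p, hp⟩ := hr.exists_walk_length_eq_dist
    cases p with
    | nil => exact absurd rfl hw
    | cons h q =>
      refine ⟨_, h, ?_⟩
      have h2 := dist_le q
      simp only [Walk.length_cons] at hp
      omega
  have hA : S.card ≤ ES.card + 1 := by
    have hfex : ∀ w ∈ S.erase x, ∃ z, G.Adj w z ∧ G.dist z x < G.dist w x := by
      intro w hw
      rw [Finset.mem_erase, hmemS] at hw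
      exact hstep w hw.1 hw.2.symm
    choose! nxt hnxt using hfex
    have hinj : ∀ w ∈ S.erase x, ∀ w' ∈ S.erase x,
        s(w, nxt w) = s(w', nxt w') → w = w' := by
      intro w hw w' hw' heq
      rw [Sym2.eq_iff] at heq
      rcases heq with ⟨h1, _⟩ | ⟨h1, h2⟩
      · exact h1
      · have d1 := (hnxt w hw).2
        have d2 := (hnxt w' hw').2
        rw [h2] at d1
        rw [← h1] at d2
        omega
    have hmaps : ∀ w ∈ S.erase x, s(w, nxt w) ∈ ES := by
      intro w hw
      have hadj := (hnxt w hw).1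
      have hwS : w ∈ S := Finset.mem_of_mem_erase hw
      rw [hES, Finset.mem_filter]
      refine ⟨mem_edgeFinset.2 (G.mem_edgeSet.2 hadj), ?_⟩
      intro z hz
      rw [Sym2.mem_iff] at hz
      rcases hz with rfl | rfl
      · exact hwS
      · exact hclosed w hwS _ hadj
    have := Finset.card_le_card_of_injOn _ hmaps hinj
    have hxS : x ∈ S := (hmemS x).2 (Reachable.refl x)
    rw [Finset.card_erase_of_mem hxS] at this
    omega
  -- Step B : handshake
  have hB : ∑ w ∈ S, G.degree w = 2 * ES.card := by
    have h1 : ∀ w, G.degree w = (G.edgeFinset.filter (fun e => w ∈ e)).card := by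
      intro w
      rw [← G.card_incidenceFinset_eq_degree w]
      congr 1
      ext e
      rw [mem_incidenceFinset, Finset.mem_filter, mem_edgeFinset]
      exact Iff.rfl
    calc ∑ w ∈ S, G.degree w
        = ∑ w ∈ S, ∑ e ∈ G.edgeFinset, (if w ∈ e then 1 else 0) := by
          refine Finset.sum_congr rfl fun w _ => ?_
          rw [h1 w, Finset.card_filter]
      _ = ∑ e ∈ G.edgeFinset, ∑ w ∈ S, (if w ∈ e then 1 else 0) := Finset.sum_comm
      _ = ∑ e ∈ G.edgeFinset, (S.filter (fun w => w ∈ e)).card := by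
          refine Finset.sum_congr rfl fun e _ => ?_
          rw [Finset.card_filter]
      _ = ∑ e ∈ G.edgeFinset, (if e ∈ ES then 2 else 0) := by
          refine Finset.sum_congr rfl fun e he => ?_
          induction e with
          | _ p q =>
            have hpq : p ≠ q := by
              intro h
              exact (G.not_isDiag_of_mem_edgeSet (mem_edgeFinset.1 he)) (by simp [h])
            have hadj : G.Adj p q := G.mem_edgeSet.1 (mem_edgeFinset.1 he)
            by_cases hc : s(p,q) ∈ ES
            · rw [if_pos hc]
              rw [hES, Finset.mem_filter] at hc
              have hp' : p ∈ S := hc.2 p (by simp)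
              have hq' : q ∈ S := hc.2 q (by simp)
              have : S.filter (fun w => w ∈ s(p,q)) = {p, q} := by
                ext w
                simp only [Finset.mem_filter, Sym2.mem_iff, Finset.mem_insert,
                  Finset.mem_singleton]
                constructor
                · rintro ⟨_, h⟩; exact h
                · rintro (rfl | rfl)
                  · exact ⟨hp', Or.inl rfl⟩
                  · exact ⟨hq', Or.inr rfl⟩
              rw [this, Finset.card_insert_of_notMem (by simp [hpq]), Finset.card_singleton]
            · rw [if_neg hc]
              rw [hES, Finset.mem_filter] at hc
              push_neg at hc
              have hnb : p ∉ S ∧ q ∉ S := by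
                constructor
                · intro hp'
                  obtain ⟨z, hz, hzS⟩ := hc he
                  rw [Sym2.mem_iff] at hz
                  rcases hz with rfl | rfl
                  · exact hzS hp'
                  · exact hzS (hclosed p hp' _ hadj)
                · intro hq'
                  obtain ⟨z, hz, hzS⟩ := hc he
                  rw [Sym2.mem_iff] at hz
                  rcases hz with rfl | rfl
                  · exact hzS (hclosed q hq' _ hadj.symm)
                  · exact hzS hq'
              have : S.filter (fun w => w ∈ s(p,q)) = ∅ := by
                ext w
                simp only [Finset.mem_filter, Sym2.mem_iff, Finset.notMem_empty,
                  iff_false, not_and]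
                rintro hw (rfl | rfl)
                · exact hnb.1 hw
                · exact hnb.2 hw
              rw [this, Finset.card_empty]
      _ = 2 * ES.card := by
          rw [Finset.sum_ite_mem]
          have : G.edgeFinset ∩ ES = ES := by
            apply Finset.inter_eq_right.2
            rw [hES]; exact Finset.filter_subset _ _
          rw [this, Finset.sum_const, smul_eq_mul, mul_comm]
  -- Step C : bound the degree sum from above
  have hxS : x ∈ S := (hmemS x).2 (Reachable.refl x)
  have huS : u ∈ S := (hmemS u).2 hru
  have hvS : v ∈ S := (hmemS v).2 hrv
  set T : Finset V := {x, u, v} with hT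
  have hTsub : T ⊆ S := by
    intro w hw
    rw [hT] at hw
    simp only [Finset.mem_insert, Finset.mem_singleton] at hw
    rcases hw with rfl | rfl | rfl <;> assumption
  have hTcard : T.card = 3 := by
    rw [hT]
    rw [Finset.card_insert_of_notMem (by simp [hxu, hxv]),
        Finset.card_insert_of_notMem (by simp [huv]), Finset.card_singleton]
  have hsum_split : ∑ w ∈ S \ T, G.degree w + ∑ w ∈ T, G.degree w = ∑ w ∈ S, G.degree w :=
    Finset.sum_sdiff hTsub
  have hsumT : ∑ w ∈ T, G.degree w ≤ 3 := by
    calc ∑ w ∈ T, G.degree w ≤ ∑ w ∈ T, 1 := by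
          refine Finset.sum_le_sum fun w hw => ?_
          rw [hT] at hw
          simp only [Finset.mem_insert, Finset.mem_singleton] at hw
          rcases hw with rfl | rfl | rfl <;> assumption
      _ = 3 := by rw [Finset.sum_const, hTcard]; simp
  have hsumRest : ∑ w ∈ S \ T, G.degree w ≤ 2 * (S.card - 3) := by
    calc ∑ w ∈ S \ T, G.degree w ≤ ∑ w ∈ S \ T, 2 :=
          Finset.sum_le_sum fun w _ => hdeg w
      _ = 2 * (S.card - 3) := by
          rw [Finset.sum_const, Finset.card_sdiff_of_subset hTsub, hTcard, smul_eq_mul, mul_comm]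
  have hScard : 3 ≤ S.card := hTcard ▸ Finset.card_le_card hTsub
  omega


open SimpleGraph Finset
variable {V : Type*} [Fintype V] [DecidableEq V]

/-- Excising the unique first edge at `x`: reachability transfers to a graph that
agrees away from `x`. -/
lemma excise {K H : SimpleGraph V} {x y₁ u : V} (hne : u ≠ x)
    (hr : K.Reachable x u) (hx : ∀ w, K.Adj x w → w = y₁)
    (hKH : ∀ p q, K.Adj p q → p ≠ x → q ≠ x → H.Adj p q) : H.Reachable y₁ u := by
  classical
  obtain ⟨p0⟩ := hr
  obtain ⟨p, hp⟩ := p0.toPath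
  cases p with
  | nil => exact absurd rfl hne
  | @cons _ w _ h q =>
    rw [Walk.cons_isPath_iff] at hp
    have hw : w = y₁ := hx _ h
    subst hw
    refine ⟨q.transfer H ?_⟩
    intro e he
    have heK := q.edges_subset_edgeSet he
    induction e with
    | _ p₁ q₁ =>
      have h1 : p₁ ∈ q.support := q.fst_mem_support_of_mem_edges he
      have h2 : q₁ ∈ q.support := q.snd_mem_support_of_mem_edges he
      have hadj : K.Adj p₁ q₁ := heK
      exact (hKH p₁ q₁ hadj (fun hh => hp.2 (hh ▸ h1)) (fun hh => hp.2 (hh ▸ h2)))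


open SimpleGraph Finset
variable {V : Type*} [Fintype V] [DecidableEq V]

open scoped Classical in
noncomputable def rotc (c : Sym2 V → ℕ) (x : V) (ys : ℕ → V) (fr : V → ℕ) (j : ℕ) :
    Sym2 V → ℕ :=
  fun e => if h : ∃ i, i < j ∧ e = s(x, ys i) then fr (ys (Nat.find h)) else c e

def rots (s : Finset (Sym2 V)) (x : V) (ys : ℕ → V) (j : ℕ) : Finset (Sym2 V) :=
  (insert s(x, ys 0) s).erase s(x, ys j)

section Rot

variable {s : Finset (Sym2 V)} {c : Sym2 V → ℕ} {x : V} {ys : ℕ → V} {fr : V → ℕ} {k : ℕ}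

/-- The fan hypotheses. -/
structure FanHyp (s : Finset (Sym2 V)) (c : Sym2 V → ℕ) (x : V) (ys : ℕ → V)
    (fr : V → ℕ) (k : ℕ) : Prop where
  hinj : ∀ i ≤ k, ∀ j ≤ k, ys i = ys j → i = j
  hmem : ∀ i, 1 ≤ i → i ≤ k → s(x, ys i) ∈ s
  hfan : ∀ i < k, c s(x, ys (i + 1)) = fr (ys i)
  h0s : s(x, ys 0) ∉ s
  hp : Proper s c
  hfr : ∀ v, fr v ∉ used s c v

variable (F : FanHyp s c x ys fr k)

include F

lemma FanHyp.edge_ne {i j : ℕ} (hi : i ≤ k) (hj : j ≤ k) (hij : i ≠ j) :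
    s(x, ys i) ≠ s(x, ys j) := by
  intro h
  exact hij (F.hinj i hi j hj (Sym2.congr_right.1 h))

lemma FanHyp.rotc_rot {j i : ℕ} (hj : j ≤ k) (hi : i < j) :
    rotc c x ys fr j s(x, ys i) = fr (ys i) := by
  have hex : ∃ i', i' < j ∧ s(x, ys i) = s(x, ys i') := ⟨i, hi, rfl⟩
  simp only [rotc]
  rw [dif_pos hex]
  obtain ⟨h1, h2⟩ := Nat.find_spec hex
  congr 1
  have h3 : i = Nat.find hex :=
    F.hinj i (le_of_lt (lt_of_lt_of_le hi hj)) _ (le_of_lt (lt_of_lt_of_le h1 hj))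
      (Sym2.congr_right.1 h2)
  rw [← h3]

omit F in
lemma rotc_not {j : ℕ} {e : Sym2 V} (h : ∀ i < j, e ≠ s(x, ys i)) :
    rotc c x ys fr j e = c e := by
  simp only [rotc]
  rw [dif_neg]
  push_neg
  exact h

omit F in
lemma mem_rots {j : ℕ} {e : Sym2 V} :
    e ∈ rots s x ys j ↔ (e = s(x, ys 0) ∨ e ∈ s) ∧ e ≠ s(x, ys j) := by
  simp only [rots, Finset.mem_erase, Finset.mem_insert]
  tauto

lemma FanHyp.unrot_mem {j : ℕ} {e : Sym2 V} (hj : j ≤ k) (he : e ∈ rots s x ys j)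
    (hu : ∀ i < j, e ≠ s(x, ys i)) : e ∈ s := by
  rw [mem_rots] at he
  rcases he.1 with h | h
  · rcases Nat.eq_zero_or_pos j with rfl | hjj
    · exact absurd h he.2
    · exact absurd h (hu 0 hjj)
  · exact h

lemma FanHyp.rot_mem {j i : ℕ} (hj : j ≤ k) (hi : i < j) : s(x, ys i) ∈ rots s x ys j := by
  rw [mem_rots]
  refine ⟨?_, F.edge_ne (le_of_lt (lt_of_lt_of_le hi hj)) hj (Nat.ne_of_lt hi)⟩
  rcases Nat.eq_zero_or_pos i with rfl | hii
  · exact Or.inl rfl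
  · exact Or.inr (F.hmem i hii (le_of_lt (lt_of_lt_of_le hi hj)))

/- fr values on the fan are colors used at x -/
lemma FanHyp.fr_mem_used_x {i : ℕ} (hi : i < k) : fr (ys i) ∈ used s c x := by
  rw [mem_used]
  exact ⟨s(x, ys (i+1)), F.hmem (i+1) (Nat.succ_le_succ (Nat.zero_le i)) hi, by simp,
    F.hfan i hi⟩

/- fr values on the fan are distinct -/
lemma FanHyp.fr_ne {i j : ℕ} (hi : i < k) (hj : j < k) (hij : i ≠ j) :
    fr (ys i) ≠ fr (ys j) := by
  rw [← F.hfan i hi, ← F.hfan j hj]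
  apply F.hp (F.hmem (i+1) (by omega) hi) (F.hmem (j+1) (by omega) hj)
  · exact F.edge_ne hi hj (by omega)
  · exact ⟨x, by simp, by simp⟩

lemma FanHyp.rot_proper {j : ℕ} (hj : j ≤ k) : Proper (rots s x ys j) (rotc c x ys fr j) := by
  classical
  have mixed : ∀ e, (∃ i, i < j ∧ e = s(x, ys i)) → ∀ e' ∈ rots s x ys j,
      (∀ i < j, e' ≠ s(x, ys i)) → (∃ v, v ∈ e ∧ v ∈ e') →
      rotc c x ys fr j e ≠ rotc c x ys fr j e' := by
    rintro e ⟨i, hi, rfl⟩ e' he' hu' ⟨v, hv, hv'⟩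
    have he's : e' ∈ s := F.unrot_mem hj he' hu'
    rw [F.rotc_rot hj hi, rotc_not hu']
    rw [Sym2.mem_iff] at hv
    rcases hv with h | h
    all_goals rw [h] at hv'
    · -- shared vertex is x
      have hii : i + 1 ≤ k := by omega
      have hne' : e' ≠ s(x, ys (i+1)) := by
        rcases Nat.lt_or_ge (i+1) j with h | h
        · exact hu' (i+1) h
        · have : i + 1 = j := by omega
          rw [this]
          exact ((mem_rots).1 he').2
      have := F.hp he's (F.hmem (i+1) (by omega) hii) hne' ⟨x, hv', by simp⟩
      rw [← F.hfan i (by omega)]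
      exact fun hh => this hh.symm
    · -- shared vertex is ys i
      intro hh
      exact F.hfr (ys i) (mem_used.2 ⟨e', he's, hv', hh.symm⟩)
  intro e he e' he' hne hshare
  by_cases h1 : ∃ i, i < j ∧ e = s(x, ys i) <;> by_cases h2 : ∃ i, i < j ∧ e' = s(x, ys i)
  · -- both rotated
    obtain ⟨i, hi, rfl⟩ := h1
    obtain ⟨i', hi', rfl⟩ := h2
    rw [F.rotc_rot hj hi, F.rotc_rot hj hi']
    have : i ≠ i' := fun hh => hne (by rw [hh])
    exact F.fr_ne (by omega) (by omega) this
  · push_neg at h2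
    exact mixed e h1 e' he' h2 hshare
  · push_neg at h1
    obtain ⟨v, hv, hv'⟩ := hshare
    exact fun hh => mixed e' h2 e he h1 ⟨v, hv', hv⟩ hh.symm
  · push_neg at h1; push_neg at h2
    rw [rotc_not h1, rotc_not h2]
    exact F.hp (F.unrot_mem hj he h1) (F.unrot_mem hj he' h2) hne hshare

lemma FanHyp.rot_used_x {j : ℕ} (hj : j ≤ k) :
    used (rots s x ys j) (rotc c x ys fr j) x = used s c x := by
  classical
  ext t
  simp only [mem_used]
  constructor
  · rintro ⟨e, he, hxe, rfl⟩
    by_cases h1 : ∃ i, i < j ∧ e = s(x, ys i)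
    · obtain ⟨i, hi, rfl⟩ := h1
      rw [F.rotc_rot hj hi]
      exact ⟨s(x, ys (i+1)), F.hmem (i+1) (by omega) (by omega), by simp,
        F.hfan i (by omega)⟩
    · push_neg at h1
      exact ⟨e, F.unrot_mem hj he h1, hxe, (rotc_not h1).symm⟩
  · rintro ⟨e, he, hxe, rfl⟩
    by_cases h1 : ∃ i, 1 ≤ i ∧ i ≤ j ∧ e = s(x, ys i)
    · obtain ⟨i, hi1, hij, rfl⟩ := h1
      refine ⟨s(x, ys (i-1)), F.rot_mem hj (by omega), by simp, ?_⟩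
      rw [F.rotc_rot hj (by omega)]
      have : i - 1 + 1 = i := by omega
      rw [← F.hfan (i-1) (by omega), this]
    · push_neg at h1
      have hu : ∀ i < j, e ≠ s(x, ys i) := by
        intro i hi
        rcases Nat.eq_zero_or_pos i with rfl | hii
        · intro hh; rw [hh] at he; exact F.h0s he
        · exact h1 i hii (by omega)
      refine ⟨e, ?_, hxe, rotc_not hu⟩
      rw [mem_rots]
      refine ⟨Or.inr he, ?_⟩
      rcases Nat.eq_zero_or_pos j with rfl | hjj
      · intro hh; rw [hh] at he; exact F.h0s he
      · exact h1 j hjj le_rfl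

lemma FanHyp.rot_used_other {j : ℕ} (hj : j ≤ k) {v : V} (hvx : v ≠ x)
    (hvf : ∀ i < j, ys i ≠ v) :
    used (rots s x ys j) (rotc c x ys fr j) v ⊆ used s c v := by
  classical
  intro t ht
  rw [mem_used] at ht ⊢
  obtain ⟨e, he, hve, rfl⟩ := ht
  have hu : ∀ i < j, e ≠ s(x, ys i) := by
    rintro i hi rfl
    rw [Sym2.mem_iff] at hve
    rcases hve with rfl | rfl
    · exact hvx rfl
    · exact hvf i hi rfl
  exact ⟨e, F.unrot_mem hj he hu, hve, (rotc_not hu).symm⟩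

lemma FanHyp.rot_lt {j : ℕ} (hj : j ≤ k) {N : ℕ} (hc : ∀ e ∈ s, c e < N)
    (hfrN : ∀ v, fr v < N) : ∀ e ∈ rots s x ys j, rotc c x ys fr j e < N := by
  classical
  intro e he
  by_cases h1 : ∃ i, i < j ∧ e = s(x, ys i)
  · obtain ⟨i, hi, rfl⟩ := h1
    rw [F.rotc_rot hj hi]
    exact hfrN _
  · push_neg at h1
    rw [rotc_not h1]
    exact hc e (F.unrot_mem hj he h1)

end Rot

open SimpleGraph Finset
variable {V : Type*} [Fintype V] [DecidableEq V]


instance kgDec {s : Finset (Sym2 V)} {c : Sym2 V → ℕ} {a b : ℕ} :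
    DecidableRel (kg s c a b).Adj := fun u w =>
  inferInstanceAs (Decidable (u ≠ w ∧ s(u, w) ∈ s ∧ (c s(u, w) = a ∨ c s(u, w) = b)))

lemma kg_comm {s : Finset (Sym2 V)} {c : Sym2 V → ℕ} {a b : ℕ} :
    kg s c a b = kg s c b a := by
  ext u w
  show _ ∧ _ ∧ _ ↔ _ ∧ _ ∧ _
  tauto

lemma kg_deg_le_two {s : Finset (Sym2 V)} {c : Sym2 V → ℕ} {a b : ℕ}
    (hp : Proper s c) (v : V) : (kg s c a b).degree v ≤ 2 := by
  have : (kg s c a b).degree v = ((kg s c a b).neighborFinset v).card := rfl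
  rw [this]
  have h2 : ({a, b} : Finset ℕ).card ≤ 2 := Finset.card_insert_le a {b}
  refine le_trans (Finset.card_le_card_of_injOn (fun u => c s(v, u)) ?_ ?_) h2
  · intro u hu
    rw [Finset.mem_coe, SimpleGraph.mem_neighborFinset] at hu
    obtain ⟨_, _, h⟩ := hu
    simp only [Finset.mem_coe, Finset.mem_insert, Finset.mem_singleton]
    exact h
  · intro u hu u' hu' heq
    simp only [Finset.coe_sort_coe, Finset.mem_coe, SimpleGraph.mem_neighborFinset] at hu hu'
    by_contra hne
    have hedge : s(v, u) ≠ s(v, u') := fun h => hne (Sym2.congr_right.1 h)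
    exact hp hu.2.1 hu'.2.1 hedge ⟨v, by simp, by simp⟩ heq

lemma kg_deg_le_one {s : Finset (Sym2 V)} {c : Sym2 V → ℕ} {a b : ℕ}
    (hp : Proper s c) (v : V) (hfree : ∀ e ∈ s, v ∈ e → c e ≠ a) :
    (kg s c a b).degree v ≤ 1 := by
  have : (kg s c a b).degree v = ((kg s c a b).neighborFinset v).card := rfl
  rw [this]
  have h2 : ({b} : Finset ℕ).card ≤ 1 := le_of_eq (Finset.card_singleton b)
  refine le_trans (Finset.card_le_card_of_injOn (fun u => c s(v, u)) ?_ ?_) h2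
  · intro u hu
    rw [Finset.mem_coe, SimpleGraph.mem_neighborFinset] at hu
    obtain ⟨_, hmem, h⟩ := hu
    rcases h with h | h
    · exact absurd h (hfree _ hmem (by simp))
    · simp only [Finset.mem_coe, Finset.mem_singleton]; exact h
  · intro u hu u' hu' heq
    simp only [Finset.coe_sort_coe, Finset.mem_coe, SimpleGraph.mem_neighborFinset] at hu hu'
    by_contra hne
    have hedge : s(v, u) ≠ s(v, u') := fun h => hne (Sym2.congr_right.1 h)
    exact hp hu.2.1 hu'.2.1 hedge ⟨v, by simp, by simp⟩ heq

lemma kg_deg_le_one' {s : Finset (Sym2 V)} {c : Sym2 V → ℕ} {a b : ℕ}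
    (hp : Proper s c) (v : V) (hfree : ∀ e ∈ s, v ∈ e → c e ≠ b) :
    (kg s c a b).degree v ≤ 1 := by
  have : (kg s c a b).degree v = ((kg s c a b).neighborFinset v).card := rfl
  rw [this]
  have h2 : ({a} : Finset ℕ).card ≤ 1 := le_of_eq (Finset.card_singleton a)
  refine le_trans (Finset.card_le_card_of_injOn (fun u => c s(v, u)) ?_ ?_) h2
  · intro u hu
    rw [Finset.mem_coe, SimpleGraph.mem_neighborFinset] at hu
    obtain ⟨_, hmem, h⟩ := hu
    rcases h with h | h
    · simp only [Finset.mem_coe, Finset.mem_singleton]; exact h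
    · exact absurd h (hfree _ hmem (by simp))
  · intro u hu u' hu' heq
    simp only [Finset.coe_sort_coe, Finset.mem_coe, SimpleGraph.mem_neighborFinset] at hu hu'
    by_contra hne
    have hedge : s(v, u) ≠ s(v, u') := fun h => hne (Sym2.congr_right.1 h)
    exact hp hu.2.1 hu'.2.1 hedge ⟨v, by simp, by simp⟩ heq

lemma proper_update {s' : Finset (Sym2 V)} {c' : Sym2 V → ℕ} {e₁ : Sym2 V} {b : ℕ}
    (hp : Proper s' c') (he : e₁ ∉ s')
    (hfree : ∀ e ∈ s', (∃ v, v ∈ e ∧ v ∈ e₁) → c' e ≠ b) :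
    Proper (insert e₁ s') (Function.update c' e₁ b) := by
  intro e he1 e' he'1 hne hsh
  rw [Finset.mem_insert] at he1 he'1
  rcases he1 with rfl | he1 <;> rcases he'1 with rfl | he'1
  · exact absurd rfl hne
  · rw [Function.update_self, Function.update_of_ne (by rintro rfl; exact he he'1) _ _]
    obtain ⟨v, hv, hv'⟩ := hsh
    exact fun h => hfree e' he'1 ⟨v, hv', hv⟩ h.symm
  · rw [Function.update_self, Function.update_of_ne (by rintro rfl; exact he he1) _ _]
    obtain ⟨v, hv, hv'⟩ := hsh
    exact hfree e he1 ⟨v, hv, hv'⟩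
  · rw [Function.update_of_ne (by rintro rfl; exact he he1) _ _,
      Function.update_of_ne (by rintro rfl; exact he he'1) _ _]
    exact hp he1 he'1 hne hsh



section Finish
variable {s : Finset (Sym2 V)} {c : Sym2 V → ℕ} {x : V} {ys : ℕ → V} {fr : V → ℕ} {k : ℕ}

lemma FanHyp.finish (F : FanHyp s c x ys fr k) {j : ℕ} (hj : j ≤ k) {c' : Sym2 V → ℕ}
    {b N : ℕ}
    (hp' : Proper (rots s x ys j) c')
    (hbx : ∀ e ∈ rots s x ys j, x ∈ e → c' e ≠ b)
    (hby : ∀ e ∈ rots s x ys j, ys j ∈ e → c' e ≠ b)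
    (hlt : ∀ e ∈ rots s x ys j, c' e < N) (hbN : b < N) :
    ∃ c'', Proper (insert s(x, ys 0) s) c'' ∧ ∀ e ∈ insert s(x, ys 0) s, c'' e < N := by
  have hmem' : s(x, ys j) ∈ insert s(x, ys 0) s := by
    rcases Nat.eq_zero_or_pos j with rfl | hjj
    · exact Finset.mem_insert_self _ _
    · exact Finset.mem_insert_of_mem (F.hmem j hjj hj)
  have hdom : insert s(x, ys j) (rots s x ys j) = insert s(x, ys 0) s :=
    Finset.insert_erase hmem'
  refine ⟨Function.update c' s(x, ys j) b, ?_, ?_⟩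
  · rw [← hdom]
    refine proper_update hp' (by simp [mem_rots]) ?_
    rintro e he ⟨v, hv, hv'⟩
    rw [Sym2.mem_iff] at hv'
    rcases hv' with rfl | rfl
    · exact hbx e he hv
    · exact hby e he hv
  · intro e he
    rw [← hdom, Finset.mem_insert] at he
    rcases he with rfl | he
    · rw [Function.update_self]; exact hbN
    · rw [Function.update_of_ne (by rintro rfl; exact (mem_rots.1 he).2 rfl) _ _]
      exact hlt e he

end Finish

section CaseSwap
variable {s : Finset (Sym2 V)} {c : Sym2 V → ℕ} {x : V} {ys : ℕ → V} {fr : V → ℕ} {k : ℕ}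

/-- Common ending of the two Kempe-chain cases: at rotation level `j`, with `fr (ys j)`
not reachable-conflicting, swap the Kempe component of `x` and color `s(x, ys j)`. -/
lemma FanHyp.caseSwap (F : FanHyp s c x ys fr k) {j : ℕ} (hj : j ≤ k) {N : ℕ}
    (hc : ∀ e ∈ s, c e < N) (hfrN : ∀ v, fr v < N) (hvx : ys j ≠ x)
    (hab : fr x ≠ fr (ys j))
    (hnr : ¬ (kg (rots s x ys j) (rotc c x ys fr j) (fr x) (fr (ys j))).Reachable x (ys j)) :
    ∃ c'', Proper (insert s(x, ys 0) s) c'' ∧ ∀ e ∈ insert s(x, ys 0) s, c'' e < N := by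
  classical
  set a := fr x with ha
  set b := fr (ys j) with hb
  set s₁ := rots s x ys j with hs₁
  set c₁ := rotc c x ys fr j with hc₁
  have hp₁ : Proper s₁ c₁ := F.rot_proper hj
  have hyne : ∀ i < j, ys i ≠ ys j := by
    intro i hi h
    have := F.hinj i (by omega) j hj h
    omega
  have hax : ∀ e ∈ s₁, x ∈ e → c₁ e ≠ a := by
    intro e he hx h
    refine F.hfr x ?_
    rw [← F.rot_used_x hj]
    exact mem_used.2 ⟨e, he, hx, h⟩
  set c₂ := kswap s₁ c₁ a b x with hc₂
  have hp₂ : Proper s₁ c₂ := kswap_proper hp₁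
  have hbx : ∀ e ∈ s₁, x ∈ e → c₂ e ≠ b := kswap_b_free hab hax
  have hby : ∀ e ∈ s₁, ys j ∈ e → c₂ e ≠ b := by
    intro e he hv h
    rw [hc₂, kswap_eq_of_not_reach he hv hnr] at h
    exact F.hfr (ys j)
      (F.rot_used_other hj hvx hyne (mem_used.2 ⟨e, he, hv, h⟩))
  refine F.finish hj hp₂ hbx hby ?_ (hfrN (ys j))
  intro e he
  exact kswap_lt (hfrN x) (hfrN (ys j)) (F.rot_lt hj hc hfrN e he)

end CaseSwap

/-- The key extension lemma: a proper partial coloring can be extended to one more edge. -/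
lemma extend (G : SimpleGraph V) [DecidableRel G.Adj] {s : Finset (Sym2 V)} {c : Sym2 V → ℕ}
    (hs : s ⊆ G.edgeFinset) (hp : Proper s c) (hc : ∀ e ∈ s, c e < G.maxDegree + 1)
    {e₀ : Sym2 V} (he₀ : e₀ ∈ G.edgeFinset) (he₀s : e₀ ∉ s) :
    ∃ c', Proper (insert e₀ s) c' ∧ ∀ e ∈ insert e₀ s, c' e < G.maxDegree + 1 := by
  classical
  set N := G.maxDegree + 1 with hN
  induction e₀ with
  | _ x y₀ =>
  have hfree : ∀ v : V, ∃ bb, bb < N ∧ bb ∉ used s c v := fun v => exists_free hs c v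
  choose fr hfrN hfr using hfree
  -- maximal fan
  set P : ℕ → Prop := fun k => ∃ ys : ℕ → V, ys 0 = y₀ ∧
    (∀ i ≤ k, ∀ j ≤ k, ys i = ys j → i = j) ∧
    (∀ i, 1 ≤ i → i ≤ k → s(x, ys i) ∈ s) ∧
    (∀ i < k, c s(x, ys (i + 1)) = fr (ys i)) with hPdef
  have hP0 : P 0 := ⟨fun _ => y₀, rfl, fun i hi j hj _ => by omega,
    fun i hi hik => by omega, fun i hi => by omega⟩
  have hPbound : ∀ m, P m → m < Fintype.card V := by
    rintro m ⟨ys, h1, h2, h3, h4⟩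
    have : (Finset.range (m + 1)).card ≤ (Finset.univ : Finset V).card := by
      refine Finset.card_le_card_of_injOn ys (fun i _ => Finset.mem_univ _) ?_
      intro i hi j hj hij
      simp only [Finset.coe_range, Set.mem_Iio] at hi hj
      exact h2 i (by omega) j (by omega) hij
    rw [Finset.card_range] at this
    have := Finset.card_univ (α := V) ▸ this
    omega
  set K := Nat.findGreatest P (Fintype.card V) with hK
  have hPK : P K := Nat.findGreatest_spec (Nat.zero_le _) hP0
  have hmax : ¬ P (K + 1) := by
    intro hPK1
    have hb := hPbound _ hPK1
    exact Nat.findGreatest_is_greatest (by rw [← hK]; omega) (by omega) hPK1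
  obtain ⟨ys, hys0, hinj, hmem, hfan⟩ := hPK
  have hxy0 : x ≠ y₀ := by
    intro h
    exact (G.not_isDiag_of_mem_edgeSet (mem_edgeFinset.1 he₀)) (by rw [h]; simp)
  have F : FanHyp s c x ys fr K :=
    ⟨hinj, hmem, hfan, by rw [hys0]; exact he₀s, hp, hfr⟩
  have hysx : ∀ i, i ≤ K → ys i ≠ x := by
    intro i hi h
    rcases Nat.eq_zero_or_pos i with rfl | hii
    · rw [hys0] at h; exact hxy0 h.symm
    · have := hs (hmem i hii hi)
      have hd := G.not_isDiag_of_mem_edgeSet (mem_edgeFinset.1 this)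
      rw [h] at hd
      exact hd (by simp)
  rw [← hys0] at he₀s he₀ ⊢
  have hynek : ∀ i < K, ys i ≠ ys K := by
    intro i hi h
    have := hinj i (le_of_lt hi) K le_rfl h
    omega
  by_cases hA : fr (ys K) ∉ used s c x
  · -- Case A : free at x too; rotate fully and color
    refine F.finish le_rfl (F.rot_proper le_rfl) ?_ ?_ (F.rot_lt le_rfl hc hfrN)
      (hfrN (ys K))
    · intro e he hx hcon
      refine hA ?_
      rw [← F.rot_used_x le_rfl]
      exact mem_used.2 ⟨e, he, hx, hcon⟩
    · intro e he hy hcon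
      exact F.hfr (ys K)
        (F.rot_used_other le_rfl (hysx K le_rfl) hynek (mem_used.2 ⟨e, he, hy, hcon⟩))
  · -- Case B : fr (ys K) is used at x
    push_neg at hA
    obtain ⟨e', he's, hxe', hce'⟩ := mem_used.1 hA
    obtain ⟨z, rfl⟩ := Sym2.mem_iff_exists.1 hxe'
    have hzne : ∃ j, 1 ≤ j ∧ j ≤ K ∧ z = ys j := by
      by_contra hno
      push_neg at hno
      apply hmax
      have hzneK : ∀ i ≤ K, z ≠ ys i := by
        intro i hi h
        rcases Nat.eq_zero_or_pos i with rfl | hii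
        · rw [h] at he's; exact he₀s he's
        · exact hno i hii hi h
      set ys' : ℕ → V := fun i => if i = K + 1 then z else ys i with hys'
      have hya : ∀ i, i ≤ K → ys' i = ys i := by
        intro i hi
        rw [hys']
        exact if_neg (by omega)
      have hyb : ys' (K + 1) = z := by rw [hys']; exact if_pos rfl
      refine ⟨ys', ?_, ?_, ?_, ?_⟩
      · rw [hya 0 (by omega)]; exact hys0
      · intro i hi j hj hij
        by_cases h1 : i = K + 1 <;> by_cases h2 : j = K + 1
        · omega
        · subst h1; rw [hyb, hya j (by omega)] at hij
          exact absurd hij (hzneK j (by omega))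
        · subst h2; rw [hyb, hya i (by omega)] at hij
          exact absurd hij.symm (hzneK i (by omega))
        · rw [hya i (by omega), hya j (by omega)] at hij
          exact hinj i (by omega) j (by omega) hij
      · intro i hi1 hiK
        by_cases h1 : i = K + 1
        · subst h1; rw [hyb]; exact he's
        · rw [hya i (by omega)]; exact hmem i hi1 (by omega)
      · intro i hi
        by_cases h1 : i = K
        · subst h1
          rw [hyb, hya K (by omega)]
          exact hce'
        · rw [hya (i + 1) (by omega), hya i (by omega)]
          exact hfan i (by omega)
    obtain ⟨j, hj1, hjK, rfl⟩ := hzne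
    have hK1 : 1 ≤ K := le_trans hj1 hjK
    have hbj : fr (ys K) = fr (ys (j - 1)) := by
      rw [← hce']
      have h := hfan (j - 1) (by omega)
      have hjj : j - 1 + 1 = j := by omega
      rw [hjj] at h
      exact h
    have hab : fr x ≠ fr (ys K) := by
      intro h
      exact hfr x (by rw [h]; exact hA)
    set K₀ := kg s c (fr x) (fr (ys K)) with hK₀
    have hdeg2 : ∀ v, K₀.degree v ≤ 2 := fun v => kg_deg_le_two hp v
    have hdegx : K₀.degree x ≤ 1 :=
      kg_deg_le_one hp x (fun e he hx h => hfr x (mem_used.2 ⟨e, he, hx, h⟩))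
    have hdegj : K₀.degree (ys (j - 1)) ≤ 1 := by
      refine kg_deg_le_one' hp (ys (j - 1)) ?_
      intro e he hv h
      refine hfr (ys (j - 1)) (mem_used.2 ⟨e, he, hv, ?_⟩)
      rw [h, ← hbj]
    have hdegk : K₀.degree (ys K) ≤ 1 := by
      refine kg_deg_le_one' hp (ys K) ?_
      intro e he hv h
      exact hfr (ys K) (mem_used.2 ⟨e, he, hv, h⟩)
    by_cases hreach : K₀.Reachable x (ys (j - 1))
    · -- Case (ii) : rotate the full fan and swap
      have hnrk : ¬ K₀.Reachable x (ys K) := by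
        intro h
        exact factA hdeg2 hdegx hdegj hdegk (Ne.symm (hysx (j - 1) (by omega)))
          (Ne.symm (hysx K le_rfl)) (hynek (j - 1) (by omega)) hreach h
      set s₁ := rots s x ys K with hs₁
      set c₁ := rotc c x ys fr K with hc₁
      have hp₁ : Proper s₁ c₁ := F.rot_proper le_rfl
      have hax : ∀ e ∈ s₁, x ∈ e → c₁ e ≠ fr x := by
        intro e he hx h
        refine hfr x ?_
        rw [← F.rot_used_x le_rfl]
        exact mem_used.2 ⟨e, he, hx, h⟩
      have hxadj : ∀ w, (kg s₁ c₁ (fr x) (fr (ys K))).Adj x w → w = ys (j - 1) := by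
        rintro w ⟨hxw, hmemw, hcol⟩
        have hcb : c₁ s(x, w) = fr (ys K) := by
          rcases hcol with h | h
          · exact absurd h (hax _ hmemw (by simp))
          · exact h
        have hjm : c₁ s(x, ys (j - 1)) = fr (ys K) := by
          rw [hc₁, F.rotc_rot le_rfl (by omega : j - 1 < K), ← hbj]
        have hjmem : s(x, ys (j - 1)) ∈ s₁ := F.rot_mem le_rfl (by omega)
        by_contra hne
        have hedge : s(x, w) ≠ s(x, ys (j - 1)) := fun h => hne (Sym2.congr_right.1 h)
        exact hp₁ hmemw hjmem hedge ⟨x, by simp, by simp⟩ (by rw [hcb, hjm])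
      have hKH : ∀ p q, (kg s₁ c₁ (fr x) (fr (ys K))).Adj p q → p ≠ x → q ≠ x →
          K₀.Adj p q := by
        rintro p q ⟨hpq, hmem₁, hcol⟩ hpx hqx
        have hrot : ∀ i < K, s(p, q) ≠ s(x, ys i) := by
          intro i hi h
          have hx : x ∈ s(p, q) := by rw [h]; simp
          rw [Sym2.mem_iff] at hx
          rcases hx with h' | h'
          · exact hpx h'.symm
          · exact hqx h'.symm
        rw [hc₁, rotc_not hrot] at hcol
        exact ⟨hpq, F.unrot_mem le_rfl hmem₁ hrot, hcol⟩
      have hnr₁ : ¬ (kg s₁ c₁ (fr x) (fr (ys K))).Reachable x (ys K) := by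
        intro h
        have := excise (hysx K le_rfl) h hxadj hKH
        exact hnrk (hreach.trans this)
      exact F.caseSwap le_rfl hc hfrN (hysx K le_rfl) hab hnr₁
    · -- Case (i) : rotate to j - 1 and swap there
      have hj'K : j - 1 ≤ K := by omega
      have hab' : fr x ≠ fr (ys (j - 1)) := by rw [← hbj]; exact hab
      refine F.caseSwap hj'K hc hfrN (hysx (j - 1) (by omega)) hab' ?_
      intro hr
      refine hreach (hr.mono ?_)
      rintro u w ⟨huw, hmem₁, hcol⟩
      by_cases hrot : ∃ i, i < j - 1 ∧ s(u, w) = s(x, ys i)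
      · obtain ⟨i, hi, heq⟩ := hrot
        rw [heq, F.rotc_rot hj'K hi] at hcol
        exfalso
        rcases hcol with h | h
        · exact hfr x (by rw [← h]; exact F.fr_mem_used_x (by omega))
        · exact F.fr_ne (by omega) (by omega : j - 1 < K) (by omega) h
      · push_neg at hrot
        rw [rotc_not hrot] at hcol
        rw [← hbj] at hcol
        exact ⟨huw, F.unrot_mem hj'K hmem₁ hrot, hcol⟩

end VizingProof

/-- Vizing's theorem: every finite simple graph has a proper edge coloring
using at most `Δ(G) + 1` colors. -/
theorem exists_proper_edge_coloring_maxDegree_succ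
    {V : Type*} [Fintype V] [DecidableEq V] (G : SimpleGraph V) [DecidableRel G.Adj] :
    ∃ c : Sym2 V → ℕ,
      (∀ e ∈ G.edgeSet, c e < G.maxDegree + 1) ∧
      (∀ e ∈ G.edgeSet, ∀ e' ∈ G.edgeSet,
        e ≠ e' → (∃ v, v ∈ e ∧ v ∈ e') → c e ≠ c e') := by
  classical
  suffices h : ∀ s : Finset (Sym2 V), s ⊆ G.edgeFinset →
      ∃ c, VizingProof.Proper s c ∧ ∀ e ∈ s, c e < G.maxDegree + 1 by
    obtain ⟨c, hp, hlt⟩ := h G.edgeFinset subset_rfl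
    refine ⟨c, ?_, ?_⟩
    · intro e he
      exact hlt e (SimpleGraph.mem_edgeFinset.2 he)
    · intro e he e' he' hne hsh
      exact hp (SimpleGraph.mem_edgeFinset.2 he) (SimpleGraph.mem_edgeFinset.2 he') hne hsh
  intro s
  induction s using Finset.induction_on with
  | empty =>
    exact fun _ => ⟨fun _ => 0, fun e he => absurd he (Finset.notMem_empty e),
      fun e he => absurd he (Finset.notMem_empty e)⟩
  | @insert e₀ s he₀s ih =>
    intro hsub
    have hs : s ⊆ G.edgeFinset := fun e he => hsub (Finset.mem_insert_of_mem he)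
    obtain ⟨c, hp, hlt⟩ := ih hs
    exact VizingProof.extend G hs hp hlt (hsub (Finset.mem_insert_self e₀ s)) he₀s
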